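/- For any positive integers i and t with 1 ≤ i ≤ t−1, the i-fold convolution of Catalan numbers satisfies ∑_{a_1+⋯+a_i = t−1, each a_j ≥ 1} ∏_{j=1}^{i} C_{a_j−1} = (i/(2t−i−2)) · C(2t−i−2, t−1), where C_k = (1/(k+1))·C(2k,k) is the k-th Catalan number. -/

import Mathlib

set_option maxHeartbeats 1000000

open Finset

private def Fcat (k m : ℕ) : ℕ := ∑ a ∈ Finset.Nat.antidiagonalTuple k m, ∏ j, catalan (a j)

private lemma Fcat_zero_right (k : ℕ) : Fcat k 0 = 1 := by
  simp [Fcat, Finset.Nat.antidiagonalTuple_zero_right]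

private lemma Fcat_zero_left (m : ℕ) : Fcat 0 (m + 1) = 0 := by
  simp [Fcat, Finset.Nat.antidiagonalTuple_zero_succ]

private lemma Fcat_succ (k m : ℕ) :
    Fcat (k + 1) m = ∑ pq ∈ Finset.HasAntidiagonal.antidiagonal m, catalan pq.1 * Fcat k pq.2 := by
  have step1 : ∑ pq ∈ Finset.HasAntidiagonal.antidiagonal m, catalan pq.1 * Fcat k pq.2
      = ∑ pq ∈ Finset.HasAntidiagonal.antidiagonal m, ∑ b ∈ Finset.Nat.antidiagonalTuple k pq.2,
          catalan pq.1 * ∏ j, catalan (b j) := by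
    refine Finset.sum_congr rfl fun pq _ => ?_
    rw [Fcat, Finset.mul_sum]
  have step2 : ∑ pq ∈ Finset.HasAntidiagonal.antidiagonal m, ∑ b ∈ Finset.Nat.antidiagonalTuple k pq.2,
          catalan pq.1 * ∏ j, catalan (b j)
      = ∑ x ∈ (Finset.HasAntidiagonal.antidiagonal m).sigma (fun pq => Finset.Nat.antidiagonalTuple k pq.2),
          catalan x.1.1 * ∏ j, catalan (x.2 j) := by
    rw [Finset.sum_sigma]
  rw [step1, step2, Fcat]
  refine Finset.sum_nbij'
    (fun (a : Fin (k + 1) → ℕ) =>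
      (⟨(a 0, ∑ j : Fin k, a j.succ), Fin.tail a⟩ : Σ _pq : ℕ × ℕ, Fin k → ℕ))
    (fun (x : Σ _pq : ℕ × ℕ, Fin k → ℕ) => Fin.cons x.1.1 x.2) ?_ ?_ ?_ ?_ ?_
  · intro a ha
    simp only [Finset.Nat.mem_antidiagonalTuple, Fin.sum_univ_succ] at ha
    simp only [Finset.mem_sigma, Finset.HasAntidiagonal.mem_antidiagonal,
      Finset.Nat.mem_antidiagonalTuple]
    exact ⟨ha, rfl⟩
  · rintro ⟨⟨p, q⟩, b⟩ hx
    simp only [Finset.mem_sigma, Finset.HasAntidiagonal.mem_antidiagonal,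
      Finset.Nat.mem_antidiagonalTuple] at hx
    simp [Finset.Nat.mem_antidiagonalTuple, Fin.sum_univ_succ, hx.1, hx.2]
  · intro a _
    exact Fin.cons_self_tail a
  · rintro ⟨⟨p, q⟩, b⟩ hx
    simp only [Finset.mem_sigma, Finset.HasAntidiagonal.mem_antidiagonal,
      Finset.Nat.mem_antidiagonalTuple] at hx
    simp [Fin.tail_cons, hx.2]
  · intro a _
    simp [Fin.prod_univ_succ, Fin.tail]

private lemma antidiag_assoc {M : Type*} [AddCommMonoid M] (m : ℕ) (g : ℕ → ℕ → ℕ → M) :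
    ∑ pq ∈ Finset.HasAntidiagonal.antidiagonal m, ∑ uv ∈ Finset.HasAntidiagonal.antidiagonal pq.1, g uv.1 uv.2 pq.2
      = ∑ uw ∈ Finset.HasAntidiagonal.antidiagonal m, ∑ vq ∈ Finset.HasAntidiagonal.antidiagonal uw.2,
          g uw.1 vq.1 vq.2 := by
  have h1 : ∑ pq ∈ Finset.HasAntidiagonal.antidiagonal m, ∑ uv ∈ Finset.HasAntidiagonal.antidiagonal pq.1, g uv.1 uv.2 pq.2
      = ∑ x ∈ (Finset.HasAntidiagonal.antidiagonal m).sigma (fun pq => Finset.HasAntidiagonal.antidiagonal pq.1),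
          g x.2.1 x.2.2 x.1.2 := by rw [Finset.sum_sigma]
  have h2 : ∑ uw ∈ Finset.HasAntidiagonal.antidiagonal m, ∑ vq ∈ Finset.HasAntidiagonal.antidiagonal uw.2, g uw.1 vq.1 vq.2
      = ∑ x ∈ (Finset.HasAntidiagonal.antidiagonal m).sigma (fun uw => Finset.HasAntidiagonal.antidiagonal uw.2),
          g x.1.1 x.2.1 x.2.2 := by rw [Finset.sum_sigma]
  rw [h1, h2]
  refine Finset.sum_nbij'
    (fun (x : Σ _pq : ℕ × ℕ, ℕ × ℕ) =>
      (⟨(x.2.1, x.2.2 + x.1.2), (x.2.2, x.1.2)⟩ : Σ _pq : ℕ × ℕ, ℕ × ℕ))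
    (fun (x : Σ _pq : ℕ × ℕ, ℕ × ℕ) =>
      (⟨(x.1.1 + x.2.1, x.2.2), (x.1.1, x.2.1)⟩ : Σ _pq : ℕ × ℕ, ℕ × ℕ)) ?_ ?_ ?_ ?_ ?_
  · rintro ⟨⟨p, q⟩, u, v⟩ hx
    simp only [Finset.mem_sigma, Finset.HasAntidiagonal.mem_antidiagonal] at hx ⊢
    exact ⟨by omega, trivial⟩
  · rintro ⟨⟨u, w⟩, v, q⟩ hx
    simp only [Finset.mem_sigma, Finset.HasAntidiagonal.mem_antidiagonal] at hx ⊢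
    exact ⟨by omega, trivial⟩
  · rintro ⟨⟨p, q⟩, u, v⟩ hx
    simp only [Finset.mem_sigma, Finset.HasAntidiagonal.mem_antidiagonal] at hx
    obtain ⟨h1, h2⟩ := hx
    subst h2
    rfl
  · rintro ⟨⟨u, w⟩, v, q⟩ hx
    simp only [Finset.mem_sigma, Finset.HasAntidiagonal.mem_antidiagonal] at hx
    obtain ⟨h1, h2⟩ := hx
    subst h2
    rfl
  · rintro ⟨⟨p, q⟩, u, v⟩ _
    rfl

private lemma Fcat_rec (k m : ℕ) :
    Fcat (k + 1) (m + 1) = Fcat k (m + 1) + Fcat (k + 2) m := by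
  rw [Fcat_succ, Finset.Nat.antidiagonal_succ, Finset.sum_cons]
  simp only [catalan_zero, one_mul, Finset.sum_map, Function.Embedding.coe_prodMap,
    Prod.map_apply, Function.Embedding.coeFn_mk, Function.Embedding.refl_apply]
  congr 1
  have h1 : ∀ pq : ℕ × ℕ, catalan (pq.1 + 1) * Fcat k pq.2
      = ∑ uv ∈ Finset.HasAntidiagonal.antidiagonal pq.1, catalan uv.1 * (catalan uv.2 * Fcat k pq.2) := by
    intro pq
    rw [catalan_succ', Finset.sum_mul]
    simp [mul_assoc]
  calc ∑ pq ∈ Finset.HasAntidiagonal.antidiagonal m, catalan (pq.1 + 1) * Fcat k pq.2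
      = ∑ pq ∈ Finset.HasAntidiagonal.antidiagonal m, ∑ uv ∈ Finset.HasAntidiagonal.antidiagonal pq.1,
          catalan uv.1 * (catalan uv.2 * Fcat k pq.2) := by
        exact Finset.sum_congr rfl fun pq _ => h1 pq
    _ = ∑ uw ∈ Finset.HasAntidiagonal.antidiagonal m, ∑ vq ∈ Finset.HasAntidiagonal.antidiagonal uw.2,
          catalan uw.1 * (catalan vq.1 * Fcat k vq.2) :=
        antidiag_assoc m (fun u v q => catalan u * (catalan v * Fcat k q))
    _ = Fcat (k + 2) m := by
        rw [Fcat_succ]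
        refine Finset.sum_congr rfl fun uw _ => ?_
        rw [Fcat_succ, Finset.mul_sum]

private noncomputable def Gcat (k m : ℕ) : ℚ :=
  (k : ℚ) / (2 * m + k) * ((2 * m + k).choose (m + k) : ℚ)

private lemma Gcat_zero_right (k : ℕ) (hk : 1 ≤ k) : Gcat k 0 = 1 := by
  have : (k : ℚ) ≠ 0 := by positivity
  simp [Gcat, Nat.choose_self, div_mul_eq_mul_div, this]

private lemma Gcat_zero_left (m : ℕ) : Gcat 0 (m + 1) = 0 := by
  simp [Gcat]

private lemma Gcat_rec (k m : ℕ) :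
    Gcat (k + 1) (m + 1) = Gcat k (m + 1) + Gcat (k + 2) m := by
  have en1 : 2 * (m + 1) + (k + 1) = 2 * m + k + 3 := by omega
  have en2 : (m + 1) + (k + 1) = m + k + 2 := by omega
  have en3 : 2 * (m + 1) + k = 2 * m + k + 2 := by omega
  have en4 : (m + 1) + k = m + k + 1 := by omega
  have en5 : 2 * m + (k + 2) = 2 * m + k + 2 := by omega
  have en6 : m + (k + 2) = m + k + 2 := by omega
  have hpascal : (2 * m + k + 3).choose (m + k + 2)
      = (2 * m + k + 2).choose (m + k + 1) + (2 * m + k + 2).choose (m + k + 2) :=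
    Nat.choose_succ_succ' (2 * m + k + 2) (m + k + 1)
  have hratio : (2 * m + k + 2).choose (m + k + 2) * (m + k + 2)
      = (2 * m + k + 2).choose (m + k + 1) * (m + 1) := by
    have h := Nat.choose_succ_right_eq (2 * m + k + 2) (m + k + 1)
    have h3 : 2 * m + k + 2 - (m + k + 1) = m + 1 := by omega
    rw [h3] at h
    exact h
  set A := ((2 * m + k + 2).choose (m + k + 1) : ℚ) with hA
  set B := ((2 * m + k + 2).choose (m + k + 2) : ℚ) with hB
  have hr : B * ((m : ℚ) + k + 2) = A * ((m : ℚ) + 1) := by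
    rw [hA, hB]
    exact_mod_cast congrArg (Nat.cast : ℕ → ℚ) hratio
  rw [Gcat, Gcat, Gcat, en1, en2, en3, en4, en5, en6, hpascal]
  push_cast
  rw [← hA, ← hB]
  have d1 : (2 * ((m : ℚ) + 1) + ((k : ℚ) + 1)) ≠ 0 := by positivity
  have d2 : (2 * ((m : ℚ) + 1) + (k : ℚ)) ≠ 0 := by positivity
  have d3 : (2 * (m : ℚ) + ((k : ℚ) + 2)) ≠ 0 := by positivity
  field_simp
  ring_nf
  linear_combination (-2 : ℚ) * ((2 : ℚ) * m + k + 2) * hr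

private lemma Fcat_eq_Gcat : ∀ m k : ℕ, 1 ≤ k ∨ 1 ≤ m → (Fcat k m : ℚ) = Gcat k m := by
  intro m
  induction m with
  | zero =>
    intro k hk
    rcases hk with hk | hk
    · rw [Fcat_zero_right, Gcat_zero_right k hk]; norm_num
    · omega
  | succ m ih =>
    intro k _
    induction k with
    | zero => rw [Fcat_zero_left, Gcat_zero_left]; norm_num
    | succ k ihk =>
      rw [Fcat_rec, Gcat_rec]
      push_cast
      rw [ihk (by omega), ih (k + 2) (by omega)]

private lemma Fcat_filter (i n : ℕ) (hn : i ≤ n) :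
    (∑ a ∈ (Finset.Nat.antidiagonalTuple i n).filter (fun a => ∀ j, 1 ≤ a j),
      ∏ j, catalan (a j - 1)) = Fcat i (n - i) := by
  rw [Fcat]
  refine Finset.sum_nbij' (fun (a : Fin i → ℕ) (j : Fin i) => a j - 1)
    (fun (b : Fin i → ℕ) (j : Fin i) => b j + 1) ?_ ?_ ?_ ?_ ?_
  · intro a ha
    simp only [Finset.mem_filter, Finset.Nat.mem_antidiagonalTuple] at ha
    simp only [Finset.Nat.mem_antidiagonalTuple]
    have hs : ∑ j, (a j - 1) + ∑ _j : Fin i, 1 = ∑ j, a j := by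
      rw [← Finset.sum_add_distrib]
      exact Finset.sum_congr rfl fun j _ => by have := ha.2 j; omega
    simp only [Finset.sum_const, Finset.card_univ, Fintype.card_fin, smul_eq_mul,
      mul_one] at hs
    omega
  · intro b hb
    simp only [Finset.Nat.mem_antidiagonalTuple] at hb
    simp only [Finset.mem_filter, Finset.Nat.mem_antidiagonalTuple]
    refine ⟨?_, fun j => by omega⟩
    rw [Finset.sum_add_distrib]
    simp only [Finset.sum_const, Finset.card_univ, Fintype.card_fin, smul_eq_mul,
      mul_one, hb]
    omega
  · intro a ha
    simp only [Finset.mem_filter] at ha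
    funext j
    have := ha.2 j
    dsimp only
    omega
  · intro b _
    funext j
    dsimp only
    omega
  · intro a _
    rfl

theorem catalan_convolution (t i : ℕ) (ht : 2 ≤ t) (hi1 : 1 ≤ i) (hi2 : i ≤ t - 1) :
    ∑ a ∈ (Finset.Nat.antidiagonalTuple i (t - 1)).filter (fun a => ∀ j, 1 ≤ a j),
        ∏ j, (catalan (a j - 1) : ℚ)
      = (i : ℚ) / (2 * (t : ℚ) - i - 2) * ((2 * t - i - 2).choose (t - 1) : ℚ) := by
  have hcast := Fcat_eq_Gcat (t - 1 - i) i (Or.inl hi1)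
  have e6 : 2 * (t - 1 - i) + i = 2 * t - i - 2 := by omega
  have e7 : (t - 1 - i) + i = t - 1 := by omega
  rw [Gcat, e6, e7] at hcast
  have e8 : ((2 * t - i - 2 : ℕ) : ℚ) = 2 * (t : ℚ) - i - 2 := by
    have h0 : (2 * t - i - 2 : ℕ) + i + 2 = 2 * t := by omega
    have h2 : (((2 * t - i - 2 : ℕ) + i + 2 : ℕ) : ℚ) = ((2 * t : ℕ) : ℚ) :=
      congrArg (Nat.cast : ℕ → ℚ) h0
    push_cast at h2
    linarith
  have e9 : 2 * ((t - 1 - i : ℕ) : ℚ) + (i : ℚ) = 2 * (t : ℚ) - i - 2 := by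
    have h := congrArg (Nat.cast : ℕ → ℚ) e6
    push_cast [e8] at h
    convert h using 2
  have key := Fcat_filter i (t - 1) (by omega)
  have keyQ : (∑ a ∈ (Finset.Nat.antidiagonalTuple i (t - 1)).filter (fun a => ∀ j, 1 ≤ a j),
      ∏ j, (catalan (a j - 1) : ℚ)) = ((Fcat i (t - 1 - i) : ℕ) : ℚ) := by
    rw [← key]
    push_cast
    rfl
  rw [keyQ, hcast, e9]
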